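/- Let (V, E, k) be an instance of d-Hitting Set and let S' be obtained by repeatedly deleting a petal of some sunflower with at least k+2 petals until no sunflower of size k+2 remains, yielding hypergraph G. Then G has exactly the same inclusion-minimal hitting sets of size at most k as H = (V, E). -/
import Mathlib


/-- A sunflower with core `C`: every pair of distinct hyperedges in `P`
intersects in exactly the set `C`. -/
def IsSunflower {α : Type*} [DecidableEq α] (P : Finset (Finset α)) (C : Finset α) : Prop :=
  ∀ e ∈ P, ∀ f ∈ P, e ≠ f → e ∩ f = C

/-- One step of the sunflower reduction: delete a petal of a sunflower with at
least `k+2` petals. -/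
def PetalStep {α : Type*} [DecidableEq α] (k : ℕ) (E E' : Finset (Finset α)) : Prop :=
  ∃ P ⊆ E, ∃ C : Finset α, IsSunflower P C ∧ k + 2 ≤ P.card ∧ ∃ e ∈ P, E' = E.erase e

/-- An inclusion-minimal hitting set of size at most `k`. -/
def IsMinHittingSet {α : Type*} [DecidableEq α]
    (E : Finset (Finset α)) (k : ℕ) (S : Finset α) : Prop :=
  S.card ≤ k ∧ (∀ e ∈ E, (S ∩ e).Nonempty) ∧ ∀ T ⊂ S, ¬ ∀ e ∈ E, (T ∩ e).Nonempty

lemma sunflower_hit {α : Type*} [DecidableEq α] {P : Finset (Finset α)} {C : Finset α}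
    {k : ℕ} {S : Finset α} {e : Finset α}
    (hsun : IsSunflower P C) (hcard : k + 2 ≤ P.card) (he : e ∈ P)
    (hS : S.card ≤ k) (hhit : ∀ f ∈ P.erase e, (S ∩ f).Nonempty) :
    (S ∩ e).Nonempty := by
  classical
  by_contra hne
  rw [Finset.not_nonempty_iff_eq_empty] at hne
  have hPe : k + 1 ≤ (P.erase e).card := by
    rw [Finset.card_erase_of_mem he]; omega
  have hne0 : (P.erase e).Nonempty := Finset.card_pos.mp (by omega)
  obtain ⟨f0, hf0⟩ := hne0
  obtain ⟨s0, _⟩ := hhit f0 hf0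
  have hCe : C ⊆ e := by
    have hf0P := Finset.mem_of_mem_erase hf0
    have hf0ne := Finset.ne_of_mem_erase hf0
    have := hsun e he f0 hf0P (Ne.symm hf0ne)
    rw [← this]; exact Finset.inter_subset_left
  have hSC : ∀ x ∈ S, x ∉ C := fun x hx hxC => by
    have : x ∈ S ∩ e := Finset.mem_inter.mpr ⟨hx, hCe hxC⟩
    simp [hne] at this
  set g : Finset α → α := fun f => if h : (S ∩ f).Nonempty then h.choose else s0 with hg
  have hmaps : ∀ f ∈ P.erase e, g f ∈ S ∩ f := by
    intro f hf
    have h := hhit f hf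
    simp only [hg, dif_pos h]
    exact h.choose_spec
  have hinj : Set.InjOn g (P.erase e) := by
    intro a ha b hb hab
    by_contra hne2
    have haP := Finset.mem_of_mem_erase ha
    have hbP := Finset.mem_of_mem_erase hb
    have hC := hsun a haP b hbP hne2
    have hga := hmaps a ha
    have hgb := hmaps b hb
    have : g a ∈ C := by
      rw [← hC]
      exact Finset.mem_inter.mpr
        ⟨(Finset.mem_inter.mp hga).2, hab ▸ (Finset.mem_inter.mp hgb).2⟩
    exact hSC _ (Finset.mem_inter.mp hga).1 this
  have := Finset.card_le_card_of_injOn g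
    (fun f hf => (Finset.mem_inter.mp (hmaps f hf)).1) hinj
  omega

lemma petal_step_iff {α : Type*} [DecidableEq α] {E E' : Finset (Finset α)} {k : ℕ}
    (h : PetalStep k E E') (S : Finset α) :
    IsMinHittingSet E k S ↔ IsMinHittingSet E' k S := by
  obtain ⟨P, hPE, C, hsun, hPcard, e, heP, rfl⟩ := h
  have hsub : E.erase e ⊆ E := Finset.erase_subset _ _
  have key : ∀ T : Finset α, T.card ≤ k → (∀ f ∈ E.erase e, (T ∩ f).Nonempty) →
      ∀ f ∈ E, (T ∩ f).Nonempty := by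
    intro T hT hhit f hf
    by_cases hfe : f = e
    · subst hfe
      exact sunflower_hit hsun hPcard heP hT (fun g hg =>
        hhit g (Finset.mem_erase.mpr
          ⟨Finset.ne_of_mem_erase hg, hPE (Finset.mem_of_mem_erase hg)⟩))
    · exact hhit f (Finset.mem_erase.mpr ⟨hfe, hf⟩)
  constructor
  · rintro ⟨hk, hhit, hmin⟩
    refine ⟨hk, fun f hf => hhit f (hsub hf), fun T hT hTh => ?_⟩
    exact hmin T hT (key T (le_trans (Finset.card_le_card hT.subset) hk) hTh)
  · rintro ⟨hk, hhit, hmin⟩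
    refine ⟨hk, key S hk hhit, fun T hT hTh => ?_⟩
    exact hmin T hT (fun f hf => hTh f (hsub hf))

/-- Full-kernel property: repeatedly deleting a petal of a sunflower with at least
`k+2` petals, until no sunflower of size `k+2` remains, preserves exactly the
inclusion-minimal hitting sets of size at most `k`. -/
theorem petal_deletion_full_kernel {α : Type*} [DecidableEq α]
    (E G : Finset (Finset α)) (k : ℕ)
    (hsteps : Relation.ReflTransGen (PetalStep k) E G)
    (hdone : ∀ P ⊆ G, ∀ C : Finset α, IsSunflower P C → P.card ≤ k + 1) :
    ∀ S : Finset α, IsMinHittingSet E k S ↔ IsMinHittingSet G k S := by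
  clear hdone
  intro S
  induction hsteps with
  | refl => rfl
  | tail _ step ih => exact ih.trans (petal_step_iff step S)
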